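/- (Forward-backward splitting, strongly monotone case.) Let η ∈ ℝⁿ be a positive vector. Let F : ℝⁿ → ℝⁿ be continuously differentiable with μ_{∞,η⁻¹}(−DF(x)) ≤ −c for all x ∈ ℝⁿ, where c > 0, and let d > 0 be a diagonal bound for F. Let G : ℝⁿ → ℝⁿ be continuously differentiable with μ_{∞,η⁻¹}(−DG(x)) ≤ 0 for all x ∈ ℝⁿ. Then F + G has at most one zero; and if x* satisfies F(x*) + G(x*) = 0, then for every α ∈ (0, 1/d], any sequence satisfying x_{k+1} + αG(x_{k+1}) = x_k − αF(x_k) for all k satisfies ‖x_{k+1} − x*‖_{∞,η⁻¹} ≤ (1 − αc) ‖x_k − x*‖_{∞,η⁻¹}; consequently x_k → x*. -/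

import Mathlib

open Filter

/-- Diagonally weighted ℓ∞ norm: ‖x‖_{∞,η⁻¹} = max_i |x_i|/η_i. -/
noncomputable def wNorm {n : ℕ} (η x : Fin n → ℝ) : ℝ := ⨆ i, |x i| / η i

/-- Diagonally weighted ℓ∞ logarithmic norm of a matrix. -/
noncomputable def logNorm {n : ℕ} (η : Fin n → ℝ) (A : Matrix (Fin n) (Fin n) ℝ) : ℝ :=
  ⨆ i, (A i i + ∑ j ∈ Finset.univ.erase i, (η j / η i) * |A i j|)

/-- Jacobian matrix of `F` at `x`: (DF(x))_{ij} = ∂F_i/∂x_j. -/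
noncomputable def jac {n : ℕ} (F : (Fin n → ℝ) → (Fin n → ℝ)) (x : Fin n → ℝ) :
    Matrix (Fin n) (Fin n) ℝ :=
  fun i j => fderiv ℝ F x (Pi.single j 1) i

lemma wNorm_nonneg {n : ℕ} {η : Fin n → ℝ} (hη : ∀ i, 0 < η i) (z : Fin n → ℝ) :
    0 ≤ wNorm η z := Real.iSup_nonneg fun i => div_nonneg (abs_nonneg _) (hη i).le

lemma le_wNorm {n : ℕ} (η z : Fin n → ℝ) (i : Fin n) : |z i| / η i ≤ wNorm η z :=
  le_ciSup (f := fun i => |z i| / η i) (Set.finite_range _).bddAbove i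

lemma wNorm_le {n : ℕ} {η z : Fin n → ℝ} {M : ℝ} (hM : 0 ≤ M) (h : ∀ i, |z i| / η i ≤ M) :
    wNorm η z ≤ M := Real.iSup_le h hM

lemma clm_apply_eq_sum {n : ℕ} (L : (Fin n → ℝ) →L[ℝ] (Fin n → ℝ)) (z : Fin n → ℝ) (i : Fin n) :
    L z i = ∑ j, L (Pi.single j 1) i * z j := by
  have hz : z = ∑ j, z j • (Pi.single j 1 : Fin n → ℝ) := by
    funext k
    simp [Finset.sum_apply, Pi.single_apply, mul_comm]
  conv_lhs => rw [hz]
  rw [map_sum]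
  simp [Finset.sum_apply, mul_comm]

lemma cont_fderiv_line {n : ℕ} {Φ : (Fin n → ℝ) → (Fin n → ℝ)} (hΦ : ContDiff ℝ 1 Φ)
    (v z w : Fin n → ℝ) (i : Fin n) :
    Continuous fun t : ℝ => (fderiv ℝ Φ (v + t • z)) w i := by
  have h1 : Continuous fun t : ℝ => v + t • z := by continuity
  have h2 : Continuous (fderiv ℝ Φ) := hΦ.continuous_fderiv one_ne_zero
  exact (continuous_apply i).comp (((h2.comp h1).clm_apply continuous_const))

lemma line_integral {n : ℕ} {Φ : (Fin n → ℝ) → (Fin n → ℝ)} (hΦ : ContDiff ℝ 1 Φ)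
    (v z : Fin n → ℝ) (i : Fin n) :
    Φ (v + z) i - Φ v i = ∫ t in (0:ℝ)..1, (fderiv ℝ Φ (v + t • z)) z i := by
  have hline : ∀ t : ℝ, HasDerivAt (fun t : ℝ => Φ (v + t • z) i)
      ((fderiv ℝ Φ (v + t • z)) z i) t := by
    intro t
    have h1 : HasDerivAt (fun t : ℝ => v + t • z) z t := by
      simpa using ((hasDerivAt_id t).smul_const z).const_add v
    have h2 := (hΦ.differentiable one_ne_zero (v + t • z)).hasFDerivAt
    have h3 := h2.comp_hasDerivAt t h1
    have h4 := (ContinuousLinearMap.proj (R := ℝ) (φ := fun _ : Fin n => ℝ) i).hasFDerivAt.comp_hasDerivAt t h3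
    exact h4
  have hcont := cont_fderiv_line hΦ v z z i
  have := intervalIntegral.integral_eq_sub_of_hasDerivAt (f := fun t : ℝ => Φ (v + t • z) i)
    (fun t _ => hline t) (hcont.intervalIntegrable 0 1)
  rw [this]
  norm_num

lemma row_est {n : ℕ} {η : Fin n → ℝ} {A : Matrix (Fin n) (Fin n) ℝ} {c : ℝ}
    (h : logNorm η (-A) ≤ -c) (i : Fin n) :
    -(A i i) + ∑ j ∈ Finset.univ.erase i, (η j / η i) * |A i j| ≤ -c := by
  refine le_trans ?_ h
  have : Nonempty (Fin n) := ⟨i⟩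
  refine le_trans (le_of_eq ?_)
    (le_ciSup (f := fun i => ((-A) i i + ∑ j ∈ Finset.univ.erase i, (η j / η i) * |(-A) i j|))
      (Set.finite_range _).bddAbove i)
  simp [Matrix.neg_apply, abs_neg]

lemma contract {n : ℕ} (hn : 0 < n) {η : Fin n → ℝ} (hη : ∀ i, 0 < η i)
    {F : (Fin n → ℝ) → (Fin n → ℝ)} (hF : ContDiff ℝ 1 F)
    {c : ℝ} (hc : 0 < c) (hmonoF : ∀ x, logNorm η (-(jac F x)) ≤ -c)
    {d : ℝ} (hd : 0 < d) (hdiag : ∀ x i, jac F x i i ≤ d)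
    {α : ℝ} (hα0 : 0 < α) (hα1 : α ≤ 1 / d) (u v : Fin n → ℝ) :
    wNorm η ((u - α • F u) - (v - α • F v)) ≤ (1 - α * c) * wNorm η (u - v) := by
  set z := u - v with hz
  set M := wNorm η z with hMdef
  have hM0 : 0 ≤ M := wNorm_nonneg hη z
  have hzj : ∀ j, |z j| ≤ η j * M := by
    intro j
    have h := le_wNorm η z j
    rw [div_le_iff₀ (hη j)] at h
    linarith
  have hαd : α * d ≤ 1 := by
    have : α * d ≤ (1/d) * d := by nlinarith
    calc α * d ≤ (1/d) * d := this
      _ = 1 := by field_simp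
  have hcd : c ≤ d := by
    have i0 : Fin n := ⟨0, hn⟩
    have h1 := row_est (hmonoF v) i0
    have h2 : 0 ≤ ∑ j ∈ Finset.univ.erase i0, (η j / η i0) * |jac F v i0 j| :=
      Finset.sum_nonneg fun j _ => mul_nonneg (div_nonneg (hη j).le (hη i0).le) (abs_nonneg _)
    exact le_trans (by linarith) (hdiag v i0)
  have hrc : (0:ℝ) ≤ 1 - α * c := by nlinarith
  refine wNorm_le (mul_nonneg hrc hM0) fun i => ?_
  rw [div_le_iff₀ (hη i)]
  have point : ∀ t : ℝ, |z i - α * (fderiv ℝ F (v + t • z)) z i| ≤ (1 - α*c) * M * η i := by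
    intro t
    set A := jac F (v + t • z) with hA
    have happ : (fderiv ℝ F (v + t • z)) z i = ∑ j, A i j * z j := clm_apply_eq_sum _ z i
    have hrow := row_est (hmonoF (v + t • z)) i
    have hAd := hdiag (v + t • z) i
    set T := ∑ j ∈ Finset.univ.erase i, (η j / η i) * |A i j| with hT
    have hT0 : 0 ≤ T :=
      Finset.sum_nonneg fun j _ => mul_nonneg (div_nonneg (hη j).le (hη i).le) (abs_nonneg _)
    have hsplit : ∑ j, A i j * z j = A i i * z i + ∑ j ∈ Finset.univ.erase i, A i j * z j :=
      (Finset.add_sum_erase _ _ (Finset.mem_univ i)).symm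
    have h1 : (0:ℝ) ≤ 1 - α * A i i := by nlinarith
    have hS : |∑ j ∈ Finset.univ.erase i, A i j * z j| ≤ T * (η i * M) := by
      calc |∑ j ∈ Finset.univ.erase i, A i j * z j|
          ≤ ∑ j ∈ Finset.univ.erase i, |A i j * z j| := Finset.abs_sum_le_sum_abs _ _
        _ ≤ ∑ j ∈ Finset.univ.erase i, (η j / η i) * |A i j| * (η i * M) := by
            refine Finset.sum_le_sum fun j _ => ?_
            rw [abs_mul]
            have he : (η j / η i) * |A i j| * (η i * M) = |A i j| * (η j * M) := by
              field_simp [(hη i).ne']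
            rw [he]
            exact mul_le_mul_of_nonneg_left (hzj j) (abs_nonneg _)
        _ = T * (η i * M) := by rw [hT, ← Finset.sum_mul]
    have e0 : z i - α * (fderiv ℝ F (v + t • z)) z i
        = (1 - α * A i i) * z i - α * ∑ j ∈ Finset.univ.erase i, A i j * z j := by
      rw [happ, hsplit]; ring
    rw [e0]
    have e1 : |(1 - α * A i i) * z i| ≤ (1 - α * A i i) * (η i * M) := by
      rw [abs_mul, abs_of_nonneg h1]
      exact mul_le_mul_of_nonneg_left (hzj i) h1
    have e2 : |α * ∑ j ∈ Finset.univ.erase i, A i j * z j| ≤ α * (T * (η i * M)) := by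
      rw [abs_mul, abs_of_pos hα0]
      exact mul_le_mul_of_nonneg_left hS hα0.le
    have e3 : |(1 - α * A i i) * z i - α * ∑ j ∈ Finset.univ.erase i, A i j * z j|
        ≤ |(1 - α * A i i) * z i| + |α * ∑ j ∈ Finset.univ.erase i, A i j * z j| :=
      abs_sub _ _
    have hfin : (1 - α * A i i) * (η i * M) + α * (T * (η i * M)) ≤ (1 - α*c) * M * η i := by
      nlinarith [mul_le_mul_of_nonneg_left hrow
        (mul_nonneg hα0.le (mul_nonneg (hη i).le hM0))]
    linarith
  have huv : v + z = u := by simp [hz]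
  have hli := line_integral hF v z i
  rw [huv] at hli
  have keyval : ((u - α • F u) - (v - α • F v)) i
      = z i - α * ∫ t in (0:ℝ)..1, (fderiv ℝ F (v + t • z)) z i := by
    rw [← hli]
    simp [hz]
    ring
  have hsub : ∫ t in (0:ℝ)..1, (z i - α * (fderiv ℝ F (v + t • z)) z i)
      = z i - α * ∫ t in (0:ℝ)..1, (fderiv ℝ F (v + t • z)) z i := by
    rw [intervalIntegral.integral_sub (g := fun t => α * (fderiv ℝ F (v + t • z)) z i) intervalIntegrable_const
      ((continuous_const.mul (cont_fderiv_line hF v z z i)).intervalIntegrable 0 1),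
      intervalIntegral.integral_const_mul, intervalIntegral.integral_const]
    norm_num
  rw [keyval, ← hsub]
  have hbd := intervalIntegral.norm_integral_le_of_norm_le_const (a := (0:ℝ)) (b := 1)
    (C := (1 - α*c) * M * η i)
    (f := fun t => z i - α * (fderiv ℝ F (v + t • z)) z i)
    (fun t _ => by simpa [Real.norm_eq_abs] using point t)
  rw [Real.norm_eq_abs] at hbd
  calc |∫ t in (0:ℝ)..1, (z i - α * (fderiv ℝ F (v + t • z)) z i)|
      ≤ (1 - α*c) * M * η i * |(1:ℝ) - 0| := hbd
    _ = (1 - α * c) * M * η i := by norm_num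


lemma expand {n : ℕ} (hn : 0 < n) {η : Fin n → ℝ} (hη : ∀ i, 0 < η i)
    {G : (Fin n → ℝ) → (Fin n → ℝ)} (hG : ContDiff ℝ 1 G)
    (hmonoG : ∀ x, logNorm η (-(jac G x)) ≤ 0)
    {α : ℝ} (hα : 0 ≤ α) (u v : Fin n → ℝ) :
    wNorm η (u - v) ≤ wNorm η ((u + α • G u) - (v + α • G v)) := by
  set z := u - v with hz
  obtain ⟨i, -, hi⟩ := Finset.exists_max_image Finset.univ (fun j => |z j| / η j)
    ⟨⟨0, hn⟩, Finset.mem_univ _⟩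
  have hi' : ∀ j, |z j| / η j ≤ |z i| / η i := fun j => hi j (Finset.mem_univ j)
  set w := (u + α • G u) - (v + α • G v) with hw
  have h1 : wNorm η z ≤ |z i| / η i := wNorm_le (div_nonneg (abs_nonneg _) (hη i).le) hi'
  refine le_trans h1 (le_trans ?_ (le_wNorm η w i))
  have hzw : |z i| ≤ |w i| := by
    set s : ℝ := if 0 ≤ z i then 1 else -1 with hs
    have hsz : s * z i = |z i| := by
      rcases le_or_gt 0 (z i) with h | h
      · simp [hs, h, abs_of_nonneg h]
      · simp [hs, not_le.mpr h, abs_of_neg h]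
    have hs1 : |s| = 1 := by
      rcases le_or_gt 0 (z i) with h | h
      · simp [hs, h]
      · simp [hs, not_le.mpr h]
    have point : ∀ t : ℝ, |z i| ≤ s * (z i + α * (fderiv ℝ G (v + t • z)) z i) := by
      intro t
      set B := jac G (v + t • z) with hB
      have happ : (fderiv ℝ G (v + t • z)) z i = ∑ j, B i j * z j := clm_apply_eq_sum _ z i
      have hrow := row_est (A := jac G (v + t • z)) (c := 0)
        (show logNorm η (-(jac G (v + t • z))) ≤ -0 by rw [neg_zero]; exact hmonoG (v + t • z)) i
      rw [neg_zero] at hrow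
      set T := ∑ j ∈ Finset.univ.erase i, (η j / η i) * |B i j| with hT
      have hBiT : T ≤ B i i := by
        have : B i i = jac G (v + t • z) i i := rfl
        linarith [hrow]
      have hsum : ∀ j ∈ Finset.univ.erase i, -((η j / η i) * |B i j| * |z i|) ≤ s * (B i j * z j) := by
        intro j hj
        have hzj : |z j| ≤ (η j / η i) * |z i| := by
          have h2 := hi' j
          rw [div_le_div_iff₀ (hη j) (hη i)] at h2
          rw [div_mul_eq_mul_div, le_div_iff₀ (hη i)]
          linarith
        have habs : |s * (B i j * z j)| ≤ (η j / η i) * |B i j| * |z i| := by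
          rw [abs_mul, hs1, one_mul, abs_mul]
          calc |B i j| * |z j| ≤ |B i j| * ((η j / η i) * |z i|) :=
                mul_le_mul_of_nonneg_left hzj (abs_nonneg _)
            _ = (η j / η i) * |B i j| * |z i| := by ring
        linarith [neg_abs_le (s * (B i j * z j))]
      have hsum2 : -(T * |z i|) ≤ ∑ j ∈ Finset.univ.erase i, s * (B i j * z j) := by
        calc -(T * |z i|) = ∑ j ∈ Finset.univ.erase i, -((η j / η i) * |B i j| * |z i|) := by
              rw [Finset.sum_neg_distrib, hT, Finset.sum_mul]
          _ ≤ _ := Finset.sum_le_sum hsum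
      have hdist : s * (z i + α * (fderiv ℝ G (v + t • z)) z i)
          = s * z i + α * (B i i * (s * z i))
            + α * ∑ j ∈ Finset.univ.erase i, s * (B i j * z j) := by
        rw [happ, ← Finset.add_sum_erase _ _ (Finset.mem_univ i), ← Finset.mul_sum]
        ring
      rw [hdist, hsz]
      nlinarith [mul_le_mul_of_nonneg_left hsum2 hα,
        mul_le_mul_of_nonneg_left hBiT (mul_nonneg hα (abs_nonneg (z i))), abs_nonneg (z i)]
    have huv : v + z = u := by simp [hz]
    have hli := line_integral hG v z i
    rw [huv] at hli
    have keyval : w i = z i + α * ∫ t in (0:ℝ)..1, (fderiv ℝ G (v + t • z)) z i := by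
      rw [← hli]
      simp [hw, hz]
      ring
    have hcont := cont_fderiv_line hG v z z i
    have hint : IntervalIntegrable (fun t => s * (z i + α * (fderiv ℝ G (v + t • z)) z i))
        MeasureTheory.volume 0 1 :=
      (continuous_const.mul (continuous_const.add (continuous_const.mul hcont))).intervalIntegrable 0 1
    have hmono := intervalIntegral.integral_mono_on (by norm_num : (0:ℝ) ≤ 1)
      intervalIntegrable_const hint (fun t _ => point t)
    rw [intervalIntegral.integral_const] at hmono
    have hswi : ∫ t in (0:ℝ)..1, s * (z i + α * (fderiv ℝ G (v + t • z)) z i) = s * w i := by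
      rw [intervalIntegral.integral_const_mul,
          intervalIntegral.integral_add (g := fun t => α * (fderiv ℝ G (v + t • z)) z i) intervalIntegrable_const
            ((continuous_const.mul hcont).intervalIntegrable 0 1),
          intervalIntegral.integral_const_mul, intervalIntegral.integral_const, keyval]
      norm_num
    have hfin : |z i| ≤ s * w i := by
      rw [← hswi]
      simpa using hmono
    calc |z i| ≤ s * w i := hfin
      _ ≤ |s * w i| := le_abs_self _
      _ = |w i| := by rw [abs_mul, hs1, one_mul]
  exact div_le_div_of_nonneg_right hzw (hη i).le

/-- Forward-backward splitting: strongly monotone case. -/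
theorem stmt_12 {n : ℕ} (η : Fin n → ℝ) (hη : ∀ i, 0 < η i)
    (F : (Fin n → ℝ) → (Fin n → ℝ)) (hF : ContDiff ℝ 1 F)
    (c : ℝ) (hc : 0 < c) (hmonoF : ∀ x, logNorm η (-(jac F x)) ≤ -c)
    (d : ℝ) (hd : 0 < d) (hdiag : ∀ x i, jac F x i i ≤ d)
    (G : (Fin n → ℝ) → (Fin n → ℝ)) (hG : ContDiff ℝ 1 G)
    (hmonoG : ∀ x, logNorm η (-(jac G x)) ≤ 0) :
    (∀ x y : Fin n → ℝ, F x + G x = 0 → F y + G y = 0 → x = y) ∧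
    (∀ xs : Fin n → ℝ, F xs + G xs = 0 →
      ∀ α ∈ Set.Ioc (0 : ℝ) (1 / d), ∀ x : ℕ → (Fin n → ℝ),
        (∀ k, x (k + 1) + α • G (x (k + 1)) = x k - α • F (x k)) →
        (∀ k, wNorm η (x (k + 1) - xs) ≤ (1 - α * c) * wNorm η (x k - xs)) ∧
        Tendsto x atTop (nhds xs)) := by
  rcases Nat.eq_zero_or_pos n with hn0 | hn
  · subst hn0
    have hsub : Subsingleton (Fin 0 → ℝ) := ⟨fun a b => funext fun i => i.elim0⟩
    have hw0 : ∀ y : Fin 0 → ℝ, wNorm η y = 0 := fun y => by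
      rw [wNorm, iSup_of_empty']; exact Real.sSup_empty
    constructor
    · intro x y _ _; exact Subsingleton.elim x y
    · intro xs _ α hα x _
      refine ⟨fun k => ?_, ?_⟩
      · rw [hw0, hw0, mul_zero]
      · have hx : x = fun _ => xs := funext fun k => Subsingleton.elim _ _
        rw [hx]
        exact tendsto_const_nhds
  · have hcd : c ≤ d := by
      have i0 : Fin n := ⟨0, hn⟩
      have h1 := row_est (hmonoF 0) i0
      have h2 : 0 ≤ ∑ j ∈ Finset.univ.erase i0, (η j / η i0) * |jac F 0 i0 j| :=
        Finset.sum_nonneg fun j _ => mul_nonneg (div_nonneg (hη j).le (hη i0).le) (abs_nonneg _)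
      exact le_trans (by linarith) (hdiag 0 i0)
    have step : ∀ (α : ℝ), 0 < α → α ≤ 1/d → ∀ xs, F xs + G xs = 0 → ∀ u p : Fin n → ℝ,
        u + α • G u = p - α • F p →
        wNorm η (u - xs) ≤ (1 - α * c) * wNorm η (p - xs) := by
      intro α hα0 hα1 xs hzero u p hrec
      have hGxs : G xs = -F xs := eq_neg_of_add_eq_zero_right hzero
      have he : xs + α • G xs = xs - α • F xs := by
        rw [hGxs, smul_neg, sub_eq_add_neg]
      calc wNorm η (u - xs)
          ≤ wNorm η ((u + α • G u) - (xs + α • G xs)) :=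
            expand hn hη hG hmonoG hα0.le u xs
        _ = wNorm η ((p - α • F p) - (xs - α • F xs)) := by rw [hrec, he]
        _ ≤ (1 - α * c) * wNorm η (p - xs) :=
            contract hn hη hF hc hmonoF hd hdiag hα0 hα1 p xs
    constructor
    · intro x y hx hy
      have hα0 : (0:ℝ) < 1/d := by positivity
      have hGx : G x = -F x := eq_neg_of_add_eq_zero_right hx
      have hrec : x + (1/d) • G x = x - (1/d) • F x := by
        rw [hGx, smul_neg, sub_eq_add_neg]
      have h1 := step (1/d) hα0 le_rfl y hy x x hrec
      have hW0 := wNorm_nonneg hη (x - y)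
      have hαc : 0 < (1/d) * c := by positivity
      have hWz : wNorm η (x - y) = 0 := by nlinarith
      funext i
      have h2 := le_wNorm η (x - y) i
      rw [hWz] at h2
      have h3 : |(x - y) i| ≤ 0 := by
        have := (div_le_iff₀ (hη i)).mp h2
        simpa using this
      have h4 : x i - y i = 0 := by
        have := abs_nonpos_iff.mp h3
        simpa using this
      linarith [h4]
    · intro xs hzero α hα x hrec
      have hstep : ∀ k, wNorm η (x (k + 1) - xs) ≤ (1 - α * c) * wNorm η (x k - xs) :=
        fun k => step α hα.1 hα.2 xs hzero (x (k+1)) (x k) (hrec k)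
      refine ⟨hstep, ?_⟩
      set r := 1 - α * c with hr
      have hαd : α * d ≤ 1 := by
        calc α * d ≤ (1/d) * d := by nlinarith [hα.1, hα.2]
          _ = 1 := by field_simp
      have hr0 : 0 ≤ r := by nlinarith [hα.1]
      have hr1 : r < 1 := by nlinarith [hα.1]
      have hbound : ∀ k, wNorm η (x k - xs) ≤ r ^ k * wNorm η (x 0 - xs) := by
        intro k
        induction k with
        | zero => simp
        | succ k ih =>
          calc wNorm η (x (k + 1) - xs) ≤ r * wNorm η (x k - xs) := hstep k
            _ ≤ r * (r ^ k * wNorm η (x 0 - xs)) := mul_le_mul_of_nonneg_left ih hr0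
            _ = r ^ (k + 1) * wNorm η (x 0 - xs) := by ring
      have hWtend : Tendsto (fun k => wNorm η (x k - xs)) atTop (nhds 0) := by
        refine squeeze_zero (fun k => wNorm_nonneg hη _) hbound ?_
        simpa using (tendsto_pow_atTop_nhds_zero_of_lt_one hr0 hr1).mul_const
          (wNorm η (x 0 - xs))
      rw [tendsto_pi_nhds]
      intro i
      rw [tendsto_iff_dist_tendsto_zero]
      refine squeeze_zero (g := fun k => η i * wNorm η (x k - xs)) (fun k => dist_nonneg) (fun k => ?_) ?_
      · show dist (x k i) (xs i) ≤ η i * wNorm η (x k - xs)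
        rw [Real.dist_eq]
        have h2 := le_wNorm η (x k - xs) i
        rw [div_le_iff₀ (hη i)] at h2
        calc |x k i - xs i| = |(x k - xs) i| := by simp
          _ ≤ wNorm η (x k - xs) * η i := h2
          _ = η i * wNorm η (x k - xs) := by ring
      · simpa using hWtend.const_mul (η i)
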